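/- For every i ≥ -1 and (p,p') ∈ ℤ², the region Reg_i(p,p') equals the set of integer points (x,y) ∈ ℤ² satisfying x ≥ p - i, y ≥ p' - i, and x + y ≥ p + p' - i - 1. -/
import Mathlib


/-- The staircase set `St_i`: for `i > 0` it is `{(r,s) : r+s = -i-1, r < 0, s < 0}`,
and for `i ≤ 0` it is `{(r,s) : r+s = -i, r ≥ 0, s ≥ 0}`. -/
def stSet (i : ℤ) : Set (ℤ × ℤ) :=
  if 0 < i then {z | z.1 + z.2 = -i - 1 ∧ z.1 < 0 ∧ z.2 < 0}
  else {z | z.1 + z.2 = -i ∧ 0 ≤ z.1 ∧ 0 ≤ z.2}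

/-- The translated staircase `St_i(p,p') = (p,p') + St_i`. -/
def stSetT (i p p' : ℤ) : Set (ℤ × ℤ) :=
  (fun z : ℤ × ℤ => (p + z.1, p' + z.2)) '' stSet i

/-- `Reg_i(p,p')`: for `i ≥ 0` the Minkowski sum `ℤ₊² + St_i(p,p')`, and for `i < 0`
(meant for `i = -1`) the set `ℤ₊² + (p+1, p'+1)`. -/
def regMink (i p p' : ℤ) : Set (ℤ × ℤ) :=
  if 0 ≤ i then
    {z | ∃ a b : ℤ, 0 ≤ a ∧ 0 ≤ b ∧ ∃ s ∈ stSetT i p p', z = (a + s.1, b + s.2)}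
  else
    {z | ∃ a b : ℤ, 0 ≤ a ∧ 0 ≤ b ∧ z = (a + (p + 1), b + (p' + 1))}

/-- For every `i ≥ -1` and `(p,p')`, the region `Reg_i(p,p')` equals the set of points
`(x,y) ∈ ℤ²` with `x ≥ p-i`, `y ≥ p'-i` and `x+y ≥ p+p'-i-1`. -/
theorem regMink_eq (i p p' : ℤ) (hi : -1 ≤ i) :
    regMink i p p' =
      {z : ℤ × ℤ | p - i ≤ z.1 ∧ p' - i ≤ z.2 ∧ p + p' - i - 1 ≤ z.1 + z.2} := by
  ext ⟨x, y⟩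
  rcases lt_trichotomy i 0 with h | h | h
  · -- i = -1
    have hi1 : i = -1 := by omega
    subst hi1
    simp only [regMink, if_neg (by norm_num : ¬ (0:ℤ) ≤ -1), Set.mem_setOf_eq,
      Prod.mk.injEq]
    constructor
    · rintro ⟨a, b, ha, hb, h1, h2⟩
      refine ⟨by omega, by omega, by omega⟩
    · rintro ⟨h1, h2, h3⟩
      exact ⟨x - (p + 1), y - (p' + 1), by omega, by omega, by omega, by omega⟩
  · -- i = 0
    subst h
    simp only [regMink, if_pos le_rfl, stSetT, stSet, if_neg (lt_irrefl (0:ℤ)),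
      Set.mem_setOf_eq, Set.mem_image, Prod.mk.injEq]
    constructor
    · rintro ⟨a, b, ha, hb, s, ⟨⟨r1, r2⟩, ⟨hsum, hr1, hr2⟩, rfl⟩, h1, h2⟩
      simp only at hsum hr1 hr2 h1 h2
      refine ⟨by omega, by omega, by omega⟩
    · rintro ⟨h1, h2, h3⟩
      exact ⟨x - p, y - p', by omega, by omega, (p, p'),
        ⟨(0, 0), ⟨by norm_num, le_rfl, le_rfl⟩, by simp⟩, by omega, by omega⟩
  · -- i > 0
    simp only [regMink, if_pos h.le, stSetT, stSet, if_pos h,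
      Set.mem_setOf_eq, Set.mem_image, Prod.mk.injEq]
    constructor
    · rintro ⟨a, b, ha, hb, s, ⟨⟨r1, r2⟩, ⟨hsum, hr1, hr2⟩, rfl⟩, h1, h2⟩
      simp only at hsum hr1 hr2 h1 h2
      refine ⟨by omega, by omega, by omega⟩
    · rintro ⟨h1, h2, h3⟩
      set r : ℤ := min (x - p) (-1) with hr
      have hrlt : r < 0 := by omega
      have hrge : -i ≤ r := by omega
      refine ⟨x - p - r, y - p' - (-i - 1 - r), by omega, by omega,
        (p + r, p' + (-i - 1 - r)), ⟨(r, -i - 1 - r), ⟨by omega, hrlt, by omega⟩,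
        rfl⟩, by omega, by omega⟩
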